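/- Let M be a matroid with finite ground set, and let F, G, H be flats of M such that F ⊂ G ⊂ H, no flat of M lies strictly between F and G, and no flat of M lies strictly between G and H. Then there exists a flat D of M with D ≠ G and F ⊂ D ⊂ H. (Hence the lattice of flats of a finite matroid is locally branched.) -/

import Mathlib

open Set

lemma matroid_aux_flat_closure {α : Type*} (M : Matroid α) (X : Set α) :
    M.IsFlat (M.closure X) := by
  rw [Matroid.closure_def, sInter_eq_iInter]
  have hne : Nonempty {F // F ∈ {F | M.IsFlat F ∧ X ∩ M.E ⊆ F}} :=
    ⟨⟨M.E, M.ground_isFlat, inter_subset_right⟩⟩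
  exact Matroid.IsFlat.iInter fun F ↦ F.2.1

/-- The lattice of flats of a matroid on a finite ground set is locally
branched: given flats `F ⊂ G ⊂ H` with no flat strictly between `F` and `G`
and no flat strictly between `G` and `H`, there is a flat `D ≠ G` with
`F ⊂ D ⊂ H`. -/
theorem matroid_flats_locallyBranched
    {α : Type*} (M : Matroid α) (hE : M.E.Finite)
    (F G H : Set α) (hF : M.IsFlat F) (hG : M.IsFlat G) (hH : M.IsFlat H)
    (hFG : F ⊂ G) (hGH : G ⊂ H)
    (hFGsat : ∀ D : Set α, M.IsFlat D → ¬(F ⊂ D ∧ D ⊂ G))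
    (hGHsat : ∀ D : Set α, M.IsFlat D → ¬(G ⊂ D ∧ D ⊂ H)) :
    ∃ D : Set α, M.IsFlat D ∧ D ≠ G ∧ F ⊂ D ∧ D ⊂ H := by
  obtain ⟨y, hyH, hyG⟩ := exists_of_ssubset hGH
  obtain ⟨x, hxG, hxF⟩ := exists_of_ssubset hFG
  have hFE : F ⊆ M.E := hF.subset_ground
  have hyE : y ∈ M.E := hH.subset_ground hyH
  set D := M.closure (insert y F) with hDdef
  have hDflat : M.IsFlat D := matroid_aux_flat_closure M _
  have hyD : y ∈ D := M.subset_closure _ (insert_subset hyE hFE) (mem_insert _ _)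
  have hFD : F ⊆ D :=
    (subset_insert _ _).trans (M.subset_closure _ (insert_subset hyE hFE))
  have hDH : D ⊆ H := by
    rw [hDdef, ← hH.closure]
    exact M.closure_subset_closure (insert_subset hyH (hFG.subset.trans hGH.subset))
  have hDneG : D ≠ G := fun h ↦ hyG (h ▸ hyD)
  have hyF : y ∉ F := fun h ↦ hyG (hFG.subset h)
  have hDneH : D ≠ H := by
    intro hDH'
    have hxD : x ∈ M.closure (insert y F) := by
      rw [← hDdef, hDH']; exact hGH.subset hxG
    have hxcl : x ∉ M.closure F := by rwa [hF.closure]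
    have hy' := Matroid.closure_exchange ⟨hxD, hxcl⟩
    have : M.closure (insert x F) ⊆ G := by
      rw [← hG.closure]
      exact M.closure_subset_closure (insert_subset hxG hFG.subset)
    exact hyG (this hy'.1)
  exact ⟨D, hDflat, hDneG, ssubset_of_subset_of_ne hFD (fun h ↦ hyF (h ▸ hyD)),
    ssubset_of_subset_of_ne hDH hDneH⟩
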